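/- Let (T, m) be a stable marked tree and let f denote forgetting a subset S of markings followed by iterated contraction of unstable vertices. Then the contraction process terminates after at most |V(T)| steps and the result is independent of the order in which unstable vertices are contracted. -/

import Mathlib

/-- A marked tree: a finite tree (vertices a finite set of naturals, edges a
finite set of unordered pairs forming a connected acyclic graph) together with
a marking function counting the marked points on each vertex.  The empty marked
tree is allowed (vertex set empty). -/
structure MarkedTree where
  verts : Finset ℕ
  edges : Finset (Sym2 ℕ)
  mark : ℕ → ℕ
  edge_mem : ∀ e ∈ edges, ∀ v ∈ e, v ∈ verts
  not_diag : ∀ e ∈ edges, ¬ e.IsDiag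
  mark_supp : ∀ v ∉ verts, mark v = 0
  /-- connected with `|E| + 1 = |V|`, i.e. a tree (or the empty graph). -/
  card_eq : verts = ∅ ∨ edges.card + 1 = verts.card
  conn : ∀ v ∈ verts, ∀ w ∈ verts,
    Relation.ReflTransGen (fun a b => s(a, b) ∈ edges) v w

/-- The degree of a vertex in a marked tree. -/
def MarkedTree.deg (T : MarkedTree) (v : ℕ) : ℕ :=
  (T.edges.filter (fun e => v ∈ e)).card

/-- The simple graph underlying a marked tree. -/
def MarkedTree.graph (T : MarkedTree) : SimpleGraph ℕ :=
  SimpleGraph.fromEdgeSet ↑T.edges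

/-- One step of the stabilization process: an unstable vertex `v`
(`deg v + mark v ≤ 2`) is contracted.  If `deg v = 0` the vertex is removed;
if `deg v = 1` it is removed and its markings are transferred to its unique
neighbor; if `deg v = 2` (so `mark v = 0`) it is removed and its two edges are
merged into one. -/
def MarkedTree.Step (T T' : MarkedTree) : Prop :=
  ∃ v ∈ T.verts, T.deg v + T.mark v ≤ 2 ∧ T'.verts = T.verts.erase v ∧
    ((T.deg v = 0 ∧ T'.edges = T.edges ∧ ∀ x, x ≠ v → T'.mark x = T.mark x) ∨
     (T.deg v = 1 ∧ ∃ w ∈ T.verts, w ≠ v ∧ s(v, w) ∈ T.edges ∧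
        T'.edges = T.edges.erase s(v, w) ∧
        T'.mark w = T.mark w + T.mark v ∧
        ∀ x, x ≠ v → x ≠ w → T'.mark x = T.mark x) ∨
     (T.deg v = 2 ∧ ∃ w₁ ∈ T.verts, ∃ w₂ ∈ T.verts, w₁ ≠ w₂ ∧
        s(v, w₁) ∈ T.edges ∧ s(v, w₂) ∈ T.edges ∧
        T'.edges = insert s(w₁, w₂) ((T.edges.erase s(v, w₁)).erase s(v, w₂)) ∧
        ∀ x, x ≠ v → T'.mark x = T.mark x))

namespace Scratch

open Relation Finset

abbrev ER (E : Finset (Sym2 ℕ)) : ℕ → ℕ → Prop := fun a b => s(a, b) ∈ E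

lemma rtg_symm {E : Finset (Sym2 ℕ)} {a b : ℕ} (h : ReflTransGen (ER E) a b) :
    ReflTransGen (ER E) b a :=
  (@ReflTransGen.stdSymm _ _ ⟨fun x y h => by unfold ER at *; rwa [Sym2.eq_swap]⟩).symm _ _ h

lemma rtg_mono {r p : ℕ → ℕ → Prop} (h : ∀ a b, r a b → ReflTransGen p a b) :
    ∀ {a b}, ReflTransGen r a b → ReflTransGen p a b :=
  fun hab => ReflTransGen.lift' (fun x => x) h _ _ hab

lemma card_le_of_conn : ∀ (n : ℕ) (E : Finset (Sym2 ℕ)) (V : Finset ℕ),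
    E.card = n →
    (∀ e ∈ E, ∀ x ∈ e, x ∈ V) →
    (∀ v ∈ V, ∀ w ∈ V, ReflTransGen (ER E) v w) →
    V.card ≤ E.card + 1 := by
  intro n
  induction n using Nat.strong_induction_on with
  | _ n IH =>
  intro E V hcard hmem hconn
  classical
  rcases Finset.eq_empty_or_nonempty E with rfl | ⟨e, he⟩
  · refine le_trans (Finset.card_le_one.mpr ?_) (by simp)
    intro x hx y hy
    rcases (hconn x hx y hy).cases_head with h | ⟨c, hc, _⟩
    · exact h
    · simp [ER] at hc
  obtain ⟨a, b, rfl⟩ : ∃ a b, e = s(a, b) := Sym2.ind (fun a b _ => ⟨a, b, rfl⟩) e he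
  have hE1 : 1 ≤ E.card := Finset.card_pos.mpr ⟨_, he⟩
  rcases eq_or_ne a b with rfl | hab
  · -- diagonal edge, just remove it
    have hconn' : ∀ v ∈ V, ∀ w ∈ V, ReflTransGen (ER (E.erase s(a, a))) v w := by
      intro v hv w hw
      refine rtg_mono (fun x y hxy => ?_) (hconn v hv w hw)
      by_cases h : s(x, y) = s(a, a)
      · rw [Sym2.eq_iff] at h
        obtain rfl : x = y := by omega
        exact ReflTransGen.refl
      · exact ReflTransGen.single (Finset.mem_erase.mpr ⟨h, hxy⟩)
    have h2 := IH (E.card - 1) (by omega) (E.erase s(a, a)) V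
      (by rw [Finset.card_erase_of_mem he]) (fun e' he' => hmem e' (Finset.mem_of_mem_erase he'))
      hconn'
    rw [Finset.card_erase_of_mem he] at h2
    omega
  set E' := E.erase s(a, b) with hE'
  have hE'card : E'.card = E.card - 1 := Finset.card_erase_of_mem he
  have hE'sub : ∀ e' ∈ E', e' ∈ E := fun e' he' => Finset.mem_of_mem_erase he'
  by_cases hd : ReflTransGen (ER E') a b
  · -- removing e keeps connectivity
    have hconn' : ∀ v ∈ V, ∀ w ∈ V, ReflTransGen (ER E') v w := by
      intro v hv w hw
      refine rtg_mono (fun x y hxy => ?_) (hconn v hv w hw)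
      by_cases h : s(x, y) = s(a, b)
      · rw [Sym2.eq_iff] at h
        rcases h with ⟨rfl, rfl⟩ | ⟨rfl, rfl⟩
        · exact hd
        · exact rtg_symm hd
      · exact ReflTransGen.single (Finset.mem_erase.mpr ⟨h, hxy⟩)
    have h2 := IH (E.card - 1) (by omega) E' V hE'card (fun e' he' => hmem e' (hE'sub e' he'))
      hconn'
    omega
  · -- the edge is a bridge; split into two components
    have haV : a ∈ V := hmem _ he a (Sym2.mem_mk_left a b)
    have hbV : b ∈ V := hmem _ he b (Sym2.mem_mk_right a b)
    -- every vertex is reachable from a or from b without the bridge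
    have key : ∀ v, ReflTransGen (ER E) a v →
        ReflTransGen (ER E') a v ∨ ReflTransGen (ER E') b v := by
      intro v hv
      induction hv with
      | refl => exact Or.inl ReflTransGen.refl
      | @tail x y h1 h2 ih =>
        by_cases h : s(x, y) = s(a, b)
        · rw [Sym2.eq_iff] at h
          rcases h with ⟨rfl, rfl⟩ | ⟨rfl, rfl⟩
          · exact Or.inr ReflTransGen.refl
          · exact Or.inl ReflTransGen.refl
        · have h2' : ER E' x y := Finset.mem_erase.mpr ⟨h, h2⟩
          rcases ih with ih | ih
          · exact Or.inl (ih.tail h2')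
          · exact Or.inr (ih.tail h2')
    -- paths within a component only use component edges
    have key2 : ∀ (r : ℕ), ∀ x y, ReflTransGen (ER E') x y → ReflTransGen (ER E') r x →
        ReflTransGen (ER (E'.filter (fun e => ∀ u ∈ e, ReflTransGen (ER E') r u))) x y := by
      intro r x y hxy
      induction hxy with
      | refl => intro _; exact ReflTransGen.refl
      | @tail c y' h1 h2 ih =>
        intro hrx
        have hrc : ReflTransGen (ER E') r c := hrx.trans h1
        refine (ih hrx).tail ?_
        refine Finset.mem_filter.mpr ⟨h2, ?_⟩
        intro u hu
        rw [Sym2.mem_iff] at hu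
        rcases hu with rfl | rfl
        · exact hrc
        · exact hrc.tail h2
    set Va := V.filter (fun v => ReflTransGen (ER E') a v) with hVa
    set Vb := V.filter (fun v => ReflTransGen (ER E') b v) with hVb
    set Ea := E'.filter (fun e => ∀ u ∈ e, ReflTransGen (ER E') a u) with hEa
    set Eb := E'.filter (fun e => ∀ u ∈ e, ReflTransGen (ER E') b u) with hEb
    have hcompa : ∀ r, r ∈ V →
        (V.filter (fun v => ReflTransGen (ER E') r v)).card ≤
          (E'.filter (fun e => ∀ u ∈ e, ReflTransGen (ER E') r u)).card + 1 := by
      intro r hrV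
      refine IH (E'.filter (fun e => ∀ u ∈ e, ReflTransGen (ER E') r u)).card ?_ _ _ rfl ?_ ?_
      · have h1 : (E'.filter (fun e => ∀ u ∈ e, ReflTransGen (ER E') r u)).card ≤ E'.card :=
          Finset.card_le_card (Finset.filter_subset _ _)
        omega
      · intro e' he' x hx
        have h1 := Finset.mem_filter.mp he'
        exact Finset.mem_filter.mpr ⟨hmem _ (hE'sub _ h1.1) x hx, h1.2 x hx⟩
      · intro x hx y hy
        have hx' := Finset.mem_filter.mp hx
        have hy' := Finset.mem_filter.mp hy
        exact key2 r x y ((rtg_symm hx'.2).trans hy'.2) hx'.2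
    have hVaux := hcompa a haV
    have hVbux := hcompa b hbV
    rw [← hVa, ← hEa] at hVaux
    rw [← hVb, ← hEb] at hVbux
    have hdisj : Disjoint Va Vb := by
      rw [Finset.disjoint_left]
      intro x hxa hxb
      exact hd (((Finset.mem_filter.mp hxa).2).trans (rtg_symm (Finset.mem_filter.mp hxb).2))
    have hdisjE : Disjoint Ea Eb := by
      rw [Finset.disjoint_left]
      intro e' hea heb
      obtain ⟨x, y, rfl⟩ : ∃ x y, e' = s(x, y) := Sym2.ind (fun x y _ => ⟨x, y, rfl⟩) e' hea
      have h1 := (Finset.mem_filter.mp hea).2 x (Sym2.mem_mk_left x y)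
      have h2 := (Finset.mem_filter.mp heb).2 x (Sym2.mem_mk_left x y)
      exact hd (h1.trans (rtg_symm h2))
    have hcover : V ⊆ Va ∪ Vb := by
      intro v hv
      rcases key v (hconn a haV v hv) with h | h
      · exact Finset.mem_union_left _ (Finset.mem_filter.mpr ⟨hv, h⟩)
      · exact Finset.mem_union_right _ (Finset.mem_filter.mpr ⟨hv, h⟩)
    have hEsub : Ea ∪ Eb ⊆ E' := by
      intro e' he'
      rcases Finset.mem_union.mp he' with h | h
      · exact (Finset.mem_filter.mp h).1
      · exact (Finset.mem_filter.mp h).1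
    have h1 : V.card ≤ Va.card + Vb.card := by
      calc V.card ≤ (Va ∪ Vb).card := Finset.card_le_card hcover
        _ = Va.card + Vb.card := Finset.card_union_of_disjoint hdisj
    have h2 : Ea.card + Eb.card ≤ E'.card := by
      rw [← Finset.card_union_of_disjoint hdisjE]
      exact Finset.card_le_card hEsub
    omega

end Scratch

namespace MarkedTree

variable {T A B : MarkedTree} {v w u z a b c d : ℕ}

lemma ext' (h1 : A.verts = B.verts) (h2 : A.edges = B.edges) (h3 : A.mark = B.mark) :
    A = B := by
  cases A; cases B; simp_all

lemma edge_ne (h : s(a, b) ∈ T.edges) : a ≠ b := by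
  intro h'
  exact T.not_diag _ h (by simp [h'])

lemma edge_left (h : s(a, b) ∈ T.edges) : a ∈ T.verts :=
  T.edge_mem _ h a (Sym2.mem_mk_left a b)

lemma edge_right (h : s(a, b) ∈ T.edges) : b ∈ T.verts :=
  T.edge_mem _ h b (Sym2.mem_mk_right a b)

lemma sym2_congr (h : s(v, a) = s(v, b)) (ha : a ≠ v) : a = b := by
  rw [Sym2.eq_iff] at h; omega

lemma sym2_ne (hx : v ≠ x') (hy : v ≠ y') : ∀ u', s(x', y') ≠ s(v, u') := by
  intro u' h; rw [Sym2.eq_iff] at h; omega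

/-- no alternative route between the endpoints of an edge -/
lemma no_detour (he : s(a, b) ∈ T.edges)
    (hpath : Relation.ReflTransGen (Scratch.ER (T.edges.erase s(a, b))) a b) : False := by
  have hconn' : ∀ v ∈ T.verts, ∀ w ∈ T.verts,
      Relation.ReflTransGen (Scratch.ER (T.edges.erase s(a, b))) v w := by
    intro v hv w hw
    refine Scratch.rtg_mono (fun x y hxy => ?_) (T.conn v hv w hw)
    by_cases h : s(x, y) = s(a, b)
    · rw [Sym2.eq_iff] at h
      rcases h with ⟨rfl, rfl⟩ | ⟨rfl, rfl⟩
      · exact hpath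
      · exact Scratch.rtg_symm hpath
    · exact Relation.ReflTransGen.single (Finset.mem_erase.mpr ⟨h, hxy⟩)
  have h1 := Scratch.card_le_of_conn _ _ T.verts rfl
    (fun e' he' x hx => T.edge_mem _ (Finset.mem_of_mem_erase he') x hx) hconn'
  have h2 : (T.edges.erase s(a, b)).card = T.edges.card - 1 := Finset.card_erase_of_mem he
  have h3 : 1 ≤ T.edges.card := Finset.card_pos.mpr ⟨_, he⟩
  have h4 : a ∈ T.verts := edge_left he
  rcases T.card_eq with h5 | h5
  · rw [h5] at h4; simp at h4
  · omega

lemma no_triangle (h1 : s(v, a) ∈ T.edges) (h2 : s(v, b) ∈ T.edges)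
    (hab : a ≠ b) (h3 : s(a, b) ∈ T.edges) : False := by
  have hva : v ≠ a := edge_ne h1
  have hvb : v ≠ b := edge_ne h2
  refine no_detour h3 ?_
  have e1 : s(a, v) ∈ T.edges.erase s(a, b) :=
    Finset.mem_erase.mpr ⟨by rw [ne_eq, Sym2.eq_iff]; omega, by rwa [Sym2.eq_swap]⟩
  have e2 : s(v, b) ∈ T.edges.erase s(a, b) :=
    Finset.mem_erase.mpr ⟨by rw [ne_eq, Sym2.eq_iff]; omega, h2⟩
  exact (Relation.ReflTransGen.single e1).tail e2

lemma deg0 (hv : v ∈ T.verts) (h : T.deg v = 0) : T.verts = {v} ∧ T.edges = ∅ := by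
  have hfil : T.edges.filter (fun e => v ∈ e) = ∅ := Finset.card_eq_zero.mp h
  have hverts : T.verts = {v} := by
    apply Finset.eq_singleton_iff_unique_mem.mpr
    refine ⟨hv, fun x hx => ?_⟩
    rcases (T.conn v hv x hx).cases_head with h' | ⟨c, hc, _⟩
    · exact h'.symm
    · exfalso
      have : s(v, c) ∈ T.edges.filter (fun e => v ∈ e) :=
        Finset.mem_filter.mpr ⟨hc, Sym2.mem_mk_left v c⟩
      simp [hfil] at this
  refine ⟨hverts, ?_⟩
  rw [Finset.eq_empty_iff_forall_notMem]
  intro e he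
  obtain ⟨x, y, rfl⟩ : ∃ x y, e = s(x, y) := Sym2.ind (fun x y _ => ⟨x, y, rfl⟩) e he
  have hx : x ∈ T.verts := edge_left he
  have hy : y ∈ T.verts := edge_right he
  rw [hverts, Finset.mem_singleton] at hx hy
  exact edge_ne he (hx.trans hy.symm)

end MarkedTree
namespace MarkedTree

variable {T A B : MarkedTree} {v w u z a b c d w₁ w₂ : ℕ} {e : Sym2 ℕ} {E : Finset (Sym2 ℕ)}

lemma card_eq' (hv : v ∈ T.verts) : T.edges.card + 1 = T.verts.card := by
  rcases T.card_eq with h | h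
  · rw [h] at hv; simp at hv
  · exact h

lemma deg1_eq (hdeg : T.deg v = 1) (hvw : s(v, w) ∈ T.edges) (he : e ∈ T.edges)
    (hv : v ∈ e) : e = s(v, w) := by
  have h1 : e ∈ T.edges.filter (fun e => v ∈ e) := Finset.mem_filter.mpr ⟨he, hv⟩
  have h2 : s(v, w) ∈ T.edges.filter (fun e => v ∈ e) :=
    Finset.mem_filter.mpr ⟨hvw, Sym2.mem_mk_left v w⟩
  exact Finset.card_le_one.mp (le_of_eq hdeg) _ h1 _ h2

lemma deg1_unique (hdeg : T.deg v = 1) (h1 : s(v, a) ∈ T.edges) (h2 : s(v, b) ∈ T.edges) :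
    a = b := by
  have := deg1_eq hdeg h2 h1 (Sym2.mem_mk_left v a)
  rw [Sym2.eq_iff] at this
  have hva : v ≠ a := edge_ne h1
  omega

lemma deg1_filter (hdeg : T.deg v = 1) (hvw : s(v, w) ∈ T.edges) :
    T.edges.filter (fun e => v ∈ e) = {s(v, w)} := by
  apply Finset.eq_singleton_iff_unique_mem.mpr
  exact ⟨Finset.mem_filter.mpr ⟨hvw, Sym2.mem_mk_left v w⟩,
    fun e he => deg1_eq hdeg hvw (Finset.mem_filter.mp he).1 (Finset.mem_filter.mp he).2⟩

lemma sym2_ne_of_ne (hva : v ≠ a) (hvb : v ≠ b) (hab : a ≠ b) : s(v, a) ≠ s(v, b) := by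
  rw [ne_eq, Sym2.eq_iff]; omega

lemma deg2_filter (hdeg : T.deg v = 2) (h1 : s(v, a) ∈ T.edges) (h2 : s(v, b) ∈ T.edges)
    (hab : a ≠ b) : T.edges.filter (fun e => v ∈ e) = {s(v, a), s(v, b)} := by
  have hva : v ≠ a := edge_ne h1
  have hvb : v ≠ b := edge_ne h2
  have hsub : {s(v, a), s(v, b)} ⊆ T.edges.filter (fun e => v ∈ e) := by
    intro e he
    rcases Finset.mem_insert.mp he with rfl | he
    · exact Finset.mem_filter.mpr ⟨h1, Sym2.mem_mk_left v a⟩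
    · rw [Finset.mem_singleton] at he; subst he
      exact Finset.mem_filter.mpr ⟨h2, Sym2.mem_mk_left v b⟩
  have hcard : (T.edges.filter (fun e => v ∈ e)).card ≤ ({s(v, a), s(v, b)} : Finset _).card := by
    rw [Finset.card_pair (sym2_ne_of_ne hva hvb hab)]
    exact le_of_eq hdeg
  exact (Finset.eq_of_subset_of_card_le hsub hcard).symm

lemma deg2_mem (hdeg : T.deg v = 2) (h1 : s(v, a) ∈ T.edges) (h2 : s(v, b) ∈ T.edges)
    (hab : a ≠ b) (he : e ∈ T.edges) (hv : v ∈ e) : e = s(v, a) ∨ e = s(v, b) := by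
  have : e ∈ T.edges.filter (fun e => v ∈ e) := Finset.mem_filter.mpr ⟨he, hv⟩
  rw [deg2_filter hdeg h1 h2 hab] at this
  simpa using this

lemma deg2_nbr (hdeg : T.deg v = 2) (h1 : s(v, a) ∈ T.edges) (h2 : s(v, b) ∈ T.edges)
    (hab : a ≠ b) (he : s(v, c) ∈ T.edges) : c = a ∨ c = b := by
  have hvc : v ≠ c := edge_ne he
  rcases deg2_mem hdeg h1 h2 hab he (Sym2.mem_mk_left v c) with h | h <;>
    rw [Sym2.eq_iff] at h <;> omega

def emptyT : MarkedTree :=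
  ⟨∅, ∅, fun _ => 0, by simp, by simp, fun _ _ => rfl, Or.inl rfl, by simp⟩

lemma step_empty (hv : v ∈ T.verts) (hdeg : T.deg v = 0) (hm : T.mark v ≤ 2) :
    T.Step emptyT := by
  obtain ⟨hverts, hedges⟩ := deg0 hv hdeg
  refine ⟨v, hv, by omega, by simp [emptyT, hverts], Or.inl ⟨hdeg, by simp [emptyT, hedges], ?_⟩⟩
  intro x hx
  have hx' : x ∉ T.verts := by simp [hverts, hx]
  simp [emptyT, T.mark_supp x hx']

def contract1 (T : MarkedTree) (v w : ℕ) (hdeg : T.deg v = 1) (hvw : s(v, w) ∈ T.edges) :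
    MarkedTree where
  verts := T.verts.erase v
  edges := T.edges.erase s(v, w)
  mark := fun x => if x = w then T.mark w + T.mark v else if x = v then 0 else T.mark x
  edge_mem := by
    intro e he x hx
    have he' := Finset.mem_of_mem_erase he
    refine Finset.mem_erase.mpr ⟨?_, T.edge_mem _ he' x hx⟩
    rintro rfl
    exact (Finset.mem_erase.mp he).1 (deg1_eq hdeg hvw he' hx)
  not_diag := fun e he => T.not_diag e (Finset.mem_of_mem_erase he)
  mark_supp := by
    intro x hx
    rw [Finset.mem_erase] at hx
    push_neg at hx
    have hwv : w ≠ v := (edge_ne hvw).symm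
    rcases eq_or_ne x w with rfl | h1
    · exact absurd (hx hwv) (by simp [edge_right hvw])
    · rcases eq_or_ne x v with rfl | h2
      · simp [h1]
      · simp [h1, h2, T.mark_supp x (hx h2)]
  card_eq := by
    refine Or.inr ?_
    rw [Finset.card_erase_of_mem hvw, Finset.card_erase_of_mem (edge_left hvw)]
    have h1 : 1 ≤ T.edges.card := Finset.card_pos.mpr ⟨_, hvw⟩
    have h2 := card_eq' (edge_left hvw)
    omega
  conn := by
    intro x hx y hy
    have hx' := Finset.mem_erase.mp hx
    have hy' := Finset.mem_erase.mp hy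
    have key : ∀ p q : ℕ, s(p, q) ∈ T.edges →
        Relation.ReflTransGen (Scratch.ER (T.edges.erase s(v, w)))
          ((fun x => if x = v then w else x) p) ((fun x => if x = v then w else x) q) := by
      intro p q hpq
      show Relation.ReflTransGen (Scratch.ER (T.edges.erase s(v, w)))
        (if p = v then w else p) (if q = v then w else q)
      have hwv : w ≠ v := (edge_ne hvw).symm
      rcases eq_or_ne p v with hp | hp
      · have hq : q = w := deg1_unique hdeg (by rw [hp] at hpq; exact hpq) hvw
        have heq : (if p = v then w else p) = (if q = v then w else q) := by
          split_ifs <;> omega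
        rw [heq]
      · rcases eq_or_ne q v with hq | hq
        · have hp' : p = w := deg1_unique hdeg
            (by rw [hq] at hpq; rwa [Sym2.eq_swap] at hpq) hvw
          have heq : (if p = v then w else p) = (if q = v then w else q) := by
            split_ifs <;> omega
          rw [heq]
        · refine Relation.ReflTransGen.single ?_
          simp only [if_neg hp, if_neg hq]
          exact Finset.mem_erase.mpr ⟨sym2_ne hp.symm hq.symm w, hpq⟩
    have h5 := Relation.ReflTransGen.lift' (fun x => if x = v then w else x) key _ _
      (T.conn x hx'.2 y hy'.2)
    simp only [Function.onFun, if_neg hx'.1, if_neg hy'.1] at h5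
    exact h5

lemma step_contract1 (hv : v ∈ T.verts) (hunst : T.deg v + T.mark v ≤ 2)
    (hdeg : T.deg v = 1) (hvw : s(v, w) ∈ T.edges) :
    T.Step (contract1 T v w hdeg hvw) := by
  refine ⟨v, hv, hunst, rfl, Or.inr (Or.inl ⟨hdeg, w, edge_right hvw, (edge_ne hvw).symm,
    hvw, rfl, ?_, ?_⟩)⟩
  · show (if w = w then _ else _) = _
    rw [if_pos rfl]
  · intro x hxv hxw
    show (if x = w then _ else _) = _
    rw [if_neg hxw, if_neg hxv]

def contract2 (T : MarkedTree) (v w₁ w₂ : ℕ) (hdeg : T.deg v = 2) (h1 : s(v, w₁) ∈ T.edges)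
    (h2 : s(v, w₂) ∈ T.edges) (h12 : w₁ ≠ w₂) : MarkedTree where
  verts := T.verts.erase v
  edges := insert s(w₁, w₂) ((T.edges.erase s(v, w₁)).erase s(v, w₂))
  mark := fun x => if x = v then 0 else T.mark x
  edge_mem := by
    intro e he x hx
    rcases Finset.mem_insert.mp he with rfl | he'
    · rw [Sym2.mem_iff] at hx
      rcases hx with rfl | rfl
      · exact Finset.mem_erase.mpr ⟨(edge_ne h1).symm, edge_right h1⟩
      · exact Finset.mem_erase.mpr ⟨(edge_ne h2).symm, edge_right h2⟩
    · have he1 := Finset.mem_erase.mp he'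
      have he2 := Finset.mem_erase.mp he1.2
      refine Finset.mem_erase.mpr ⟨?_, T.edge_mem _ he2.2 x hx⟩
      rintro rfl
      rcases deg2_mem hdeg h1 h2 h12 he2.2 hx with h | h
      · exact he2.1 h
      · exact he1.1 h
  not_diag := by
    intro e he
    rcases Finset.mem_insert.mp he with rfl | he'
    · rw [Sym2.mk_isDiag_iff]; exact h12
    · exact T.not_diag e (Finset.mem_of_mem_erase (Finset.mem_of_mem_erase he'))
  mark_supp := by
    intro x hx
    rw [Finset.mem_erase] at hx
    push_neg at hx
    rcases eq_or_ne x v with rfl | h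
    · simp
    · simp [h, T.mark_supp x (hx h)]
  card_eq := by
    refine Or.inr ?_
    have hne : s(v, w₂) ≠ s(v, w₁) :=
      (sym2_ne_of_ne (edge_ne h1) (edge_ne h2) h12).symm
    have hnotin : s(w₁, w₂) ∉ (T.edges.erase s(v, w₁)).erase s(v, w₂) := by
      intro h
      exact no_triangle h1 h2 h12 (Finset.mem_of_mem_erase (Finset.mem_of_mem_erase h))
    rw [Finset.card_insert_of_notMem hnotin,
      Finset.card_erase_of_mem (Finset.mem_erase.mpr ⟨hne, h2⟩),
      Finset.card_erase_of_mem h1, Finset.card_erase_of_mem (edge_left h1)]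
    have hsub : {s(v, w₁), s(v, w₂)} ⊆ T.edges := by
      intro e he
      rcases Finset.mem_insert.mp he with rfl | he
      · exact h1
      · rw [Finset.mem_singleton] at he; subst he; exact h2
    have h2' : 2 ≤ T.edges.card := by
      have := Finset.card_le_card hsub
      rwa [Finset.card_pair hne.symm] at this
    have h3 := card_eq' (edge_left h1)
    omega
  conn := by
    intro x hx y hy
    have hx' := Finset.mem_erase.mp hx
    have hy' := Finset.mem_erase.mp hy
    have key : ∀ p q : ℕ, s(p, q) ∈ T.edges →
        Relation.ReflTransGen
          (Scratch.ER (insert s(w₁, w₂) ((T.edges.erase s(v, w₁)).erase s(v, w₂))))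
          ((fun x => if x = v then w₁ else x) p) ((fun x => if x = v then w₁ else x) q) := by
      intro p q hpq
      show Relation.ReflTransGen
        (Scratch.ER (insert s(w₁, w₂) ((T.edges.erase s(v, w₁)).erase s(v, w₂))))
        (if p = v then w₁ else p) (if q = v then w₁ else q)
      have hw1 : w₁ ≠ v := (edge_ne h1).symm
      have hw2 : w₂ ≠ v := (edge_ne h2).symm
      rcases eq_or_ne p v with hp | hp
      · rcases deg2_nbr hdeg h1 h2 h12 (by rw [hp] at hpq; exact hpq) with hq | hq
        · have heq : (if p = v then w₁ else p) = (if q = v then w₁ else q) := by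
            split_ifs <;> omega
          rw [heq]
        · rw [if_pos hp, if_neg (by omega : ¬ q = v)]
          rw [hq]
          exact Relation.ReflTransGen.single (Finset.mem_insert_self _ _)
      · rcases eq_or_ne q v with hq | hq
        · rcases deg2_nbr hdeg h1 h2 h12
            (by rw [hq] at hpq; rwa [Sym2.eq_swap] at hpq) with hp' | hp'
          · have heq : (if p = v then w₁ else p) = (if q = v then w₁ else q) := by
              split_ifs <;> omega
            rw [heq]
          · rw [if_pos hq, if_neg hp, hp']
            refine Relation.ReflTransGen.single ?_
            show s(w₂, w₁) ∈ _
            rw [Sym2.eq_swap]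
            exact Finset.mem_insert_self _ _
        · refine Relation.ReflTransGen.single ?_
          simp only [if_neg hp, if_neg hq]
          exact Finset.mem_insert_of_mem (Finset.mem_erase.mpr ⟨sym2_ne hp.symm hq.symm w₂,
            Finset.mem_erase.mpr ⟨sym2_ne hp.symm hq.symm w₁, hpq⟩⟩)
    have h5 := Relation.ReflTransGen.lift' (fun x => if x = v then w₁ else x) key _ _
      (T.conn x hx'.2 y hy'.2)
    simp only [Function.onFun, if_neg hx'.1, if_neg hy'.1] at h5
    exact h5

lemma step_contract2 (hv : v ∈ T.verts) (hunst : T.deg v + T.mark v ≤ 2)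
    (hdeg : T.deg v = 2) (h1 : s(v, w₁) ∈ T.edges) (h2 : s(v, w₂) ∈ T.edges) (h12 : w₁ ≠ w₂) :
    T.Step (contract2 T v w₁ w₂ hdeg h1 h2 h12) := by
  refine ⟨v, hv, hunst, rfl, Or.inr (Or.inr ⟨hdeg, w₁, edge_right h1, w₂, edge_right h2, h12,
    h1, h2, rfl, ?_⟩)⟩
  intro x hxv
  simp [contract2, hxv]

end MarkedTree
namespace MarkedTree

variable {T A B : MarkedTree} {v w u z a b c d w₁ w₂ : ℕ} {e : Sym2 ℕ} {E : Finset (Sym2 ℕ)}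

lemma deg_def (T : MarkedTree) (v : ℕ) :
    T.deg v = (T.edges.filter (fun e => v ∈ e)).card := rfl

lemma not_mem_sym2 (h1 : v ≠ a) (h2 : v ≠ b) : v ∉ s(a, b) := by
  rw [Sym2.mem_iff]; omega

lemma fil_erase (E : Finset (Sym2 ℕ)) (e : Sym2 ℕ) (v : ℕ) (hv : v ∉ e) :
    (E.erase e).filter (fun e' => v ∈ e') = E.filter (fun e' => v ∈ e') := by
  rw [Finset.filter_erase]
  exact Finset.erase_eq_of_notMem (fun h => hv (Finset.mem_filter.mp h).2)

lemma fil_insert_nm (hv : v ∉ e) :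
    (insert e E).filter (fun e' => v ∈ e') = E.filter (fun e' => v ∈ e') := by
  rw [Finset.filter_insert, if_neg hv]

lemma fil_insert_m (hv : v ∈ e) :
    (insert e E).filter (fun e' => v ∈ e') = insert e (E.filter (fun e' => v ∈ e')) := by
  rw [Finset.filter_insert, if_pos hv]

lemma join11
    (hv : v ∈ T.verts) (hvI : T.deg v + T.mark v ≤ 2)
    (hAverts : A.verts = T.verts.erase v)
    (hdv : T.deg v = 1) (hu : u ∈ T.verts) (huv : u ≠ v) (hvu : s(v, u) ∈ T.edges)
    (hAedges : A.edges = T.edges.erase s(v, u)) (hAmu : A.mark u = T.mark u + T.mark v)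
    (hAm : ∀ x, x ≠ v → x ≠ u → A.mark x = T.mark x)
    (hw : w ∈ T.verts) (hwI : T.deg w + T.mark w ≤ 2)
    (hBverts : B.verts = T.verts.erase w)
    (hdw : T.deg w = 1) (hz : z ∈ T.verts) (hzw : z ≠ w) (hwz : s(w, z) ∈ T.edges)
    (hBedges : B.edges = T.edges.erase s(w, z)) (hBmz : B.mark z = T.mark z + T.mark w)
    (hBm : ∀ x, x ≠ w → x ≠ z → B.mark x = T.mark x)
    (hvw : v ≠ w) : ∃ C, A.Step C ∧ B.Step C := by
  have hmv : T.mark v ≤ 1 := by omega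
  have hmw : T.mark w ≤ 1 := by omega
  have hfv : T.edges.filter (fun e => v ∈ e) = {s(v, u)} := deg1_filter hdv hvu
  have hfw : T.edges.filter (fun e => w ∈ e) = {s(w, z)} := deg1_filter hdw hwz
  rcases eq_or_ne u w with huw | huw
  · -- two-vertex case : u = w, hence z = v
    rw [huw] at hvu hAedges hAmu hfv
    have hzv : z = v := deg1_unique hdw hwz (by rwa [Sym2.eq_swap] at hvu)
    rw [hzv] at hwz hBedges hBmz hfw
    have hAw : w ∈ A.verts := by rw [hAverts]; exact Finset.mem_erase.mpr ⟨hvw.symm, hw⟩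
    have hAdeg : A.deg w = 0 := by
      rw [deg_def, hAedges, Finset.filter_erase, hfw]
      rw [Sym2.eq_swap (a := w) (b := v)]
      simp
    have hBv : v ∈ B.verts := by rw [hBverts]; exact Finset.mem_erase.mpr ⟨hvw, hv⟩
    have hBdeg : B.deg v = 0 := by
      rw [deg_def, hBedges, Finset.filter_erase, hfv]
      rw [Sym2.eq_swap (a := w) (b := v)]
      simp
    refine ⟨emptyT, step_empty hAw hAdeg ?_, step_empty hBv hBdeg ?_⟩
    · rw [hAmu]; omega
    · rw [hBmz]; omega
  · -- generic case
    have hzv : z ≠ v := by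
      intro h
      refine huw (deg1_unique hdv ?_ hvu).symm
      rw [h] at hwz; rwa [Sym2.eq_swap] at hwz
    have hwvu : w ∉ s(v, u) := not_mem_sym2 hvw.symm huw.symm
    have hvwz : v ∉ s(w, z) := not_mem_sym2 hvw hzv.symm
    have hne1 : s(w, z) ≠ s(v, u) := sym2_ne hvw hzv.symm u
    have hne2 : s(v, u) ≠ s(w, z) := sym2_ne hvw.symm huw.symm z
    have hAw : w ∈ A.verts := by rw [hAverts]; exact Finset.mem_erase.mpr ⟨hvw.symm, hw⟩
    have hAdw : A.deg w = 1 := by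
      rw [deg_def, hAedges, fil_erase _ _ _ hwvu]; exact hdw
    have hAwz : s(w, z) ∈ A.edges := by
      rw [hAedges]; exact Finset.mem_erase.mpr ⟨hne1, hwz⟩
    have hAmw : A.mark w = T.mark w := hAm w hvw.symm huw.symm
    have hAunst : A.deg w + A.mark w ≤ 2 := by rw [hAdw, hAmw]; omega
    refine ⟨contract1 A w z hAdw hAwz, step_contract1 hAw hAunst hAdw hAwz, ?_⟩
    have hBv : v ∈ B.verts := by rw [hBverts]; exact Finset.mem_erase.mpr ⟨hvw, hv⟩
    have hBdv : B.deg v = 1 := by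
      rw [deg_def, hBedges, fil_erase _ _ _ hvwz]; exact hdv
    have hBmv : B.mark v = T.mark v := hBm v hvw hzv.symm
    refine ⟨v, hBv, by rw [hBdv, hBmv]; omega, ?_, Or.inr (Or.inl ⟨hBdv, u, ?_, huv, ?_, ?_, ?_, ?_⟩)⟩
    · show A.verts.erase w = B.verts.erase v
      rw [hAverts, hBverts, Finset.erase_right_comm]
    · rw [hBverts]; exact Finset.mem_erase.mpr ⟨huw, hu⟩
    · rw [hBedges]; exact Finset.mem_erase.mpr ⟨hne2, hvu⟩
    · show A.edges.erase s(w, z) = B.edges.erase s(v, u)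
      rw [hAedges, hBedges, Finset.erase_right_comm]
    · -- C.mark u = B.mark u + B.mark v
      rcases eq_or_ne u z with rfl | huz
      · show (if u = u then A.mark u + A.mark w else _) = _
        rw [if_pos rfl, hAmu, hAmw, hBmz, hBmv]; omega
      · show (if u = z then _ else if u = w then 0 else A.mark u) = _
        rw [if_neg huz, if_neg huw, hAmu, hBm u huw huz, hBmv]
    · intro x hxv hxu
      show (if x = z then A.mark z + A.mark w else if x = w then 0 else A.mark x) = B.mark x
      rcases eq_or_ne x z with rfl | hxz
      · rw [if_pos rfl, hAm x hxv hxu, hAmw, hBmz]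
      · rcases eq_or_ne x w with rfl | hxw
        · rw [if_neg hxz, if_pos rfl]
          exact (B.mark_supp x (by simp [hBverts])).symm
        · rw [if_neg hxz, if_neg hxw, hAm x hxv hxu, hBm x hxw hxz]

end MarkedTree
namespace MarkedTree

variable {T A B : MarkedTree} {v w u z a b c d w₁ w₂ : ℕ} {e : Sym2 ℕ} {E : Finset (Sym2 ℕ)}

lemma edges2_swap (E B' : Finset (Sym2 ℕ)) (v w₁ w₂ : ℕ)
    (h : B' = insert s(w₁, w₂) ((E.erase s(v, w₁)).erase s(v, w₂))) :
    B' = insert s(w₂, w₁) ((E.erase s(v, w₂)).erase s(v, w₁)) := by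
  rw [h, Finset.erase_right_comm, Sym2.eq_swap (a := w₁) (b := w₂)]

/-- the adjacent case of join12, with B's step data normalised so that the
first neighbour of `w` is `v` itself. -/
lemma join12adj
    (hv : v ∈ T.verts) (hvI : T.deg v + T.mark v ≤ 2) (hAverts : A.verts = T.verts.erase v)
    (hdv : T.deg v = 1) (hvu : s(v, w) ∈ T.edges)
    (hAedges : A.edges = T.edges.erase s(v, w)) (hAmu : A.mark w = T.mark w + T.mark v)
    (hAm : ∀ x, x ≠ v → x ≠ w → A.mark x = T.mark x)
    (hw : w ∈ T.verts) (hwI : T.deg w + T.mark w ≤ 2) (hBverts : B.verts = T.verts.erase w)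
    (hdw : T.deg w = 2) (hc : c ∈ T.verts) (hvc : v ≠ c)
    (hwc : s(w, c) ∈ T.edges)
    (hBedges : B.edges = insert s(v, c) ((T.edges.erase s(w, v)).erase s(w, c)))
    (hBm : ∀ x, x ≠ w → B.mark x = T.mark x)
    (hvw : v ≠ w) : ∃ C, A.Step C ∧ B.Step C := by
  have hmw0 : T.mark w = 0 := by omega
  have hmv : T.mark v ≤ 1 := by omega
  have hcw : c ≠ w := (edge_ne hwc).symm
  have hwv : s(w, v) ∈ T.edges := by rwa [Sym2.eq_swap]
  have hfw : T.edges.filter (fun e => w ∈ e) = {s(w, v), s(w, c)} :=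
    deg2_filter hdw hwv hwc hvc
  have hfv : T.edges.filter (fun e => v ∈ e) = {s(v, w)} := deg1_filter hdv hvu
  have hvcE : s(v, c) ∉ T.edges := by
    intro h
    exact hcw (sym2_congr (deg1_eq hdv hvu h (Sym2.mem_mk_left v c)).symm
      ((edge_ne hvu).symm : w ≠ v)).symm
  -- facts about A
  have hAw : w ∈ A.verts := by rw [hAverts]; exact Finset.mem_erase.mpr ⟨hvw.symm, hw⟩
  have hAc : c ∈ A.verts := by rw [hAverts]; exact Finset.mem_erase.mpr ⟨hvc.symm, hc⟩
  have hAdw : A.deg w = 1 := by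
    rw [deg_def, hAedges, Finset.filter_erase, hfw]
    rw [Sym2.eq_swap (a := v) (b := w)]
    rw [Finset.erase_insert (by simp [sym2_ne_of_ne (edge_ne hwv) (edge_ne hwc) hvc])]
    simp
  have hAwc : s(w, c) ∈ A.edges := by
    rw [hAedges]
    exact Finset.mem_erase.mpr ⟨sym2_ne hvw hvc w, hwc⟩
  have hAunst : A.deg w + A.mark w ≤ 2 := by rw [hAdw, hAmu]; omega
  refine ⟨contract1 A w c hAdw hAwc, step_contract1 hAw hAunst hAdw hAwc, ?_⟩
  -- Step B C at v
  have hBv : v ∈ B.verts := by rw [hBverts]; exact Finset.mem_erase.mpr ⟨hvw, hv⟩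
  have hBdv : B.deg v = 1 := by
    rw [deg_def, hBedges, fil_insert_m (Sym2.mem_mk_left v c), Finset.filter_erase,
      Finset.filter_erase, hfv]
    rw [Sym2.eq_swap (a := w) (b := v), Finset.erase_singleton, Finset.erase_empty]
    simp
  have hBmv : B.mark v = T.mark v := hBm v hvw
  refine ⟨v, hBv, by rw [hBdv, hBmv]; omega, ?_,
    Or.inr (Or.inl ⟨hBdv, c, ?_, hvc.symm, ?_, ?_, ?_, ?_⟩)⟩
  · show A.verts.erase w = B.verts.erase v
    rw [hAverts, hBverts, Finset.erase_right_comm]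
  · rw [hBverts]; exact Finset.mem_erase.mpr ⟨hcw, hc⟩
  · rw [hBedges]; exact Finset.mem_insert_self _ _
  · show A.edges.erase s(w, c) = B.edges.erase s(v, c)
    rw [hAedges, hBedges, Finset.erase_insert (by
      intro h
      exact hvcE (Finset.mem_of_mem_erase (Finset.mem_of_mem_erase h)))]
    rw [Sym2.eq_swap (a := w) (b := v)]
  · show (if c = c then A.mark c + A.mark w else _) = _
    rw [if_pos rfl, hAm c hvc.symm hcw, hAmu, hBm c hcw, hBmv]
    omega
  · intro x hxv hxc
    show (if x = c then _ else if x = w then 0 else A.mark x) = B.mark x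
    rcases eq_or_ne x w with hxw | hxw
    · rw [if_neg (by omega : ¬ x = c), if_pos hxw]
      exact (B.mark_supp x (by simp [hBverts, hxw])).symm
    · rw [if_neg hxc, if_neg hxw, hAm x hxv hxw, hBm x hxw]

lemma join12
    (hv : v ∈ T.verts) (hvI : T.deg v + T.mark v ≤ 2) (hAverts : A.verts = T.verts.erase v)
    (hdv : T.deg v = 1) (hu : u ∈ T.verts) (huv : u ≠ v) (hvu : s(v, u) ∈ T.edges)
    (hAedges : A.edges = T.edges.erase s(v, u)) (hAmu : A.mark u = T.mark u + T.mark v)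
    (hAm : ∀ x, x ≠ v → x ≠ u → A.mark x = T.mark x)
    (hw : w ∈ T.verts) (hwI : T.deg w + T.mark w ≤ 2) (hBverts : B.verts = T.verts.erase w)
    (hdw : T.deg w = 2) (hw1 : w₁ ∈ T.verts) (hw2 : w₂ ∈ T.verts) (h12 : w₁ ≠ w₂)
    (he1 : s(w, w₁) ∈ T.edges) (he2 : s(w, w₂) ∈ T.edges)
    (hBedges : B.edges = insert s(w₁, w₂) ((T.edges.erase s(w, w₁)).erase s(w, w₂)))
    (hBm : ∀ x, x ≠ w → B.mark x = T.mark x)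
    (hvw : v ≠ w) : ∃ C, A.Step C ∧ B.Step C := by
  rcases eq_or_ne u w with huw | huw
  · -- v is adjacent to w
    rw [huw] at hvu hAedges hAmu
    replace hAm : ∀ x, x ≠ v → x ≠ w → A.mark x = T.mark x := by
      intro x h1 h2; exact hAm x h1 (by rw [huw]; exact h2)
    have hwv : s(w, v) ∈ T.edges := by rwa [Sym2.eq_swap] at hvu
    rcases deg2_nbr hdw he1 he2 h12 hwv with h | h
    · rw [← h] at hBedges
      have h12' : v ≠ w₂ := by omega
      exact join12adj hv hvI hAverts hdv hvu hAedges hAmu hAm hw hwI hBverts hdw hw2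
        h12' he2 hBedges hBm hvw
    · have hBedges' := edges2_swap _ _ _ _ _ hBedges
      rw [← h] at hBedges'
      have h12' : v ≠ w₁ := by omega
      exact join12adj hv hvI hAverts hdv hvu hAedges hAmu hAm hw hwI hBverts hdw hw1
        h12' he1 hBedges' hBm hvw
  · -- v is not adjacent to w
    have hvw1 : v ≠ w₁ := by
      rintro rfl
      exact huw (deg1_unique hdv (by rwa [Sym2.eq_swap] at he1) hvu).symm
    have hvw2 : v ≠ w₂ := by
      rintro rfl
      exact huw (deg1_unique hdv (by rwa [Sym2.eq_swap] at he2) hvu).symm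
    have hwvu : w ∉ s(v, u) := not_mem_sym2 hvw.symm huw.symm
    have hAdw : A.deg w = 2 := by
      rw [deg_def, hAedges, fil_erase _ _ _ hwvu]; exact hdw
    have hA1 : s(w, w₁) ∈ A.edges := by
      rw [hAedges]; exact Finset.mem_erase.mpr ⟨sym2_ne hvw hvw1 u, he1⟩
    have hA2 : s(w, w₂) ∈ A.edges := by
      rw [hAedges]; exact Finset.mem_erase.mpr ⟨sym2_ne hvw hvw2 u, he2⟩
    have hAw : w ∈ A.verts := by rw [hAverts]; exact Finset.mem_erase.mpr ⟨hvw.symm, hw⟩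
    have hAmw : A.mark w = T.mark w := hAm w hvw.symm huw.symm
    have hAunst : A.deg w + A.mark w ≤ 2 := by rw [hAdw, hAmw]; omega
    refine ⟨contract2 A w w₁ w₂ hAdw hA1 hA2 h12,
      step_contract2 hAw hAunst hAdw hA1 hA2 h12, ?_⟩
    have hBv : v ∈ B.verts := by rw [hBverts]; exact Finset.mem_erase.mpr ⟨hvw, hv⟩
    have hBdv : B.deg v = 1 := by
      rw [deg_def, hBedges, fil_insert_nm (not_mem_sym2 hvw1 hvw2),
        fil_erase _ _ _ (not_mem_sym2 hvw hvw2), fil_erase _ _ _ (not_mem_sym2 hvw hvw1)]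
      exact hdv
    have hBmv : B.mark v = T.mark v := hBm v hvw
    refine ⟨v, hBv, by rw [hBdv, hBmv]; omega, ?_,
      Or.inr (Or.inl ⟨hBdv, u, ?_, huv, ?_, ?_, ?_, ?_⟩)⟩
    · show A.verts.erase w = B.verts.erase v
      rw [hAverts, hBverts, Finset.erase_right_comm]
    · rw [hBverts]; exact Finset.mem_erase.mpr ⟨huw, hu⟩
    · rw [hBedges]
      refine Finset.mem_insert_of_mem (Finset.mem_erase.mpr ⟨sym2_ne hvw.symm huw.symm w₂,
        Finset.mem_erase.mpr ⟨sym2_ne hvw.symm huw.symm w₁, hvu⟩⟩)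
    · show insert s(w₁, w₂) ((A.edges.erase s(w, w₁)).erase s(w, w₂)) = B.edges.erase s(v, u)
      rw [hAedges, hBedges,
        Finset.erase_insert_of_ne (sym2_ne hvw1 hvw2 u : s(w₁, w₂) ≠ s(v, u))]
      congr 1
      ext e'
      simp only [Finset.mem_erase]
      tauto
    · show (if u = w then 0 else A.mark u) = B.mark u + B.mark v
      rw [if_neg huw, hAmu, hBm u huw, hBmv]
    · intro x hxv hxu
      show (if x = w then 0 else A.mark x) = B.mark x
      rcases eq_or_ne x w with rfl | hxw
      · rw [if_pos rfl]
        exact (B.mark_supp x (by simp [hBverts])).symm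
      · rw [if_neg hxw, hAm x hxv hxu, hBm x hxw]

end MarkedTree
namespace MarkedTree

variable {T A B : MarkedTree} {v w u z a p q r t w₁ w₂ : ℕ} {e : Sym2 ℕ} {E : Finset (Sym2 ℕ)}

lemma pair_erase (x y : Sym2 ℕ) (h : x ≠ y) : ({x, y} : Finset (Sym2 ℕ)).erase y = {x} := by
  rw [Finset.pair_comm, Finset.erase_insert (by simp [h.symm])]

/-- the adjacent case of join22: `v` has neighbours `a` and `w`,
`w` has neighbours `d` and `v`. -/
lemma join22adj {a d : ℕ}
    (hv : v ∈ T.verts) (hvI : T.deg v + T.mark v ≤ 2) (hAverts : A.verts = T.verts.erase v)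
    (hdegv : T.deg v = 2) (ha : a ∈ T.verts) (haw : a ≠ w)
    (hea : s(v, a) ∈ T.edges) (hevw : s(v, w) ∈ T.edges)
    (hAedges : A.edges = insert s(a, w) ((T.edges.erase s(v, a)).erase s(v, w)))
    (hAm : ∀ x, x ≠ v → A.mark x = T.mark x)
    (hw : w ∈ T.verts) (hwI : T.deg w + T.mark w ≤ 2) (hBverts : B.verts = T.verts.erase w)
    (hdegw : T.deg w = 2) (hd : d ∈ T.verts) (hd_ne : d ≠ v)
    (hwd : s(w, d) ∈ T.edges)
    (hBedges : B.edges = insert s(d, v) ((T.edges.erase s(w, d)).erase s(w, v)))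
    (hBm : ∀ x, x ≠ w → B.mark x = T.mark x)
    (hvw : v ≠ w) : ∃ C, A.Step C ∧ B.Step C := by
  have hmv0 : T.mark v = 0 := by omega
  have hmw0 : T.mark w = 0 := by omega
  have hva : v ≠ a := edge_ne hea
  have hwd' : w ≠ d := edge_ne hwd
  have hwv : s(w, v) ∈ T.edges := by rwa [Sym2.eq_swap] at hevw
  have had : a ≠ d := by
    intro h
    refine no_triangle (by rwa [Sym2.eq_swap] at hea : s(a, v) ∈ T.edges)
      (?_ : s(a, w) ∈ T.edges) hvw hevw
    rw [h]; rwa [Sym2.eq_swap] at hwd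
  have hawE : s(a, w) ∉ T.edges := fun h => no_triangle hea hevw haw h
  have hvdE : s(v, d) ∉ T.edges := fun h =>
    no_triangle hwd hwv hd_ne (by rwa [Sym2.eq_swap] at h)
  have hfw : T.edges.filter (fun e => w ∈ e) = {s(w, d), s(w, v)} :=
    deg2_filter hdegw hwd hwv hd_ne
  have hfv : T.edges.filter (fun e => v ∈ e) = {s(v, a), s(v, w)} :=
    deg2_filter hdegv hea hevw haw
  -- A-side facts
  have hAw : w ∈ A.verts := by rw [hAverts]; exact Finset.mem_erase.mpr ⟨hvw.symm, hw⟩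
  have hAdw : A.deg w = 2 := by
    rw [deg_def, hAedges, fil_insert_m (Sym2.mem_mk_right a w), Finset.filter_erase,
      Finset.filter_erase, hfw]
    rw [show ({s(w, d), s(w, v)} : Finset (Sym2 ℕ)).erase s(v, a) = {s(w, d), s(w, v)} from
      Finset.erase_eq_of_notMem (by simp [Sym2.eq_iff]; omega)]
    rw [Sym2.eq_swap (a := v) (b := w)]
    rw [pair_erase _ _ (sym2_ne_of_ne hwd' (edge_ne hwv) hd_ne)]
    rw [Finset.card_insert_of_notMem (by simp [Sym2.eq_iff]; omega)]
    simp
  have hAwa : s(w, a) ∈ A.edges := by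
    rw [hAedges, Sym2.eq_swap (a := w) (b := a)]
    exact Finset.mem_insert_self _ _
  have hAwd : s(w, d) ∈ A.edges := by
    rw [hAedges]
    exact Finset.mem_insert_of_mem (Finset.mem_erase.mpr ⟨sym2_ne hvw hd_ne.symm w,
      Finset.mem_erase.mpr ⟨sym2_ne hvw hd_ne.symm a, hwd⟩⟩)
  have hAmw : A.mark w = T.mark w := hAm w hvw.symm
  have hAunst : A.deg w + A.mark w ≤ 2 := by rw [hAdw, hAmw]; omega
  refine ⟨contract2 A w a d hAdw hAwa hAwd had,
    step_contract2 hAw hAunst hAdw hAwa hAwd had, ?_⟩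
  -- Step B C at v
  have hBv : v ∈ B.verts := by rw [hBverts]; exact Finset.mem_erase.mpr ⟨hvw, hv⟩
  have hBdegv : B.deg v = 2 := by
    rw [deg_def, hBedges, fil_insert_m (Sym2.mem_mk_right d v), Finset.filter_erase,
      Finset.filter_erase, hfv]
    rw [show ({s(v, a), s(v, w)} : Finset (Sym2 ℕ)).erase s(w, d) = {s(v, a), s(v, w)} from
      Finset.erase_eq_of_notMem (by simp [Sym2.eq_iff]; omega)]
    rw [Sym2.eq_swap (a := w) (b := v)]
    rw [pair_erase _ _ (sym2_ne_of_ne hva (edge_ne hevw) haw)]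
    rw [Finset.card_insert_of_notMem (by simp [Sym2.eq_iff]; omega)]
    simp
  have hBmv : B.mark v = T.mark v := hBm v hvw
  refine ⟨v, hBv, by rw [hBdegv, hBmv]; omega, ?_,
    Or.inr (Or.inr ⟨hBdegv, a, ?_, d, ?_, had, ?_, ?_, ?_, ?_⟩)⟩
  · show A.verts.erase w = B.verts.erase v
    rw [hAverts, hBverts, Finset.erase_right_comm]
  · rw [hBverts]; exact Finset.mem_erase.mpr ⟨haw, ha⟩
  · rw [hBverts]; exact Finset.mem_erase.mpr ⟨hwd'.symm, hd⟩
  · -- s(v, a) ∈ B.edges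
    rw [hBedges]
    exact Finset.mem_insert_of_mem (Finset.mem_erase.mpr ⟨sym2_ne hvw.symm haw.symm v,
      Finset.mem_erase.mpr ⟨sym2_ne hvw.symm haw.symm d, hea⟩⟩)
  · -- s(v, d) ∈ B.edges
    rw [hBedges, Sym2.eq_swap (a := v) (b := d)]
    exact Finset.mem_insert_self _ _
  · -- edge sets agree
    show insert s(a, d) ((A.edges.erase s(w, a)).erase s(w, d)) =
      insert s(a, d) ((B.edges.erase s(v, a)).erase s(v, d))
    rw [hAedges, hBedges]
    rw [Sym2.eq_swap (a := w) (b := a), Sym2.eq_swap (a := w) (b := v),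
      Sym2.eq_swap (a := d) (b := v)]
    rw [Finset.erase_insert (fun hmem => hawE
      (Finset.mem_of_mem_erase (Finset.mem_of_mem_erase hmem)))]
    rw [Finset.erase_insert_of_ne (sym2_ne_of_ne hd_ne.symm hva had.symm : s(v, d) ≠ s(v, a))]
    rw [Finset.erase_insert (fun hmem => hvdE (Finset.mem_of_mem_erase
      (Finset.mem_of_mem_erase (Finset.mem_of_mem_erase hmem))))]
    congr 1
    ext e'
    simp only [Finset.mem_erase]
    tauto
  · -- marks agree
    intro x hxv
    show (if x = w then 0 else A.mark x) = B.mark x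
    rcases eq_or_ne x w with hxw | hxw
    · rw [if_pos hxw]
      exact (B.mark_supp x (by simp [hBverts, hxw])).symm
    · rw [if_neg hxw, hAm x hxv, hBm x hxw]

lemma join22
    (hv : v ∈ T.verts) (hvI : T.deg v + T.mark v ≤ 2) (hAverts : A.verts = T.verts.erase v)
    (hdegv : T.deg v = 2) (hp : p ∈ T.verts) (hq : q ∈ T.verts) (hpq : p ≠ q)
    (hep : s(v, p) ∈ T.edges) (heq : s(v, q) ∈ T.edges)
    (hAedges : A.edges = insert s(p, q) ((T.edges.erase s(v, p)).erase s(v, q)))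
    (hAm : ∀ x, x ≠ v → A.mark x = T.mark x)
    (hw : w ∈ T.verts) (hwI : T.deg w + T.mark w ≤ 2) (hBverts : B.verts = T.verts.erase w)
    (hdegw : T.deg w = 2) (hr : r ∈ T.verts) (ht : t ∈ T.verts) (hrt : r ≠ t)
    (her : s(w, r) ∈ T.edges) (het : s(w, t) ∈ T.edges)
    (hBedges : B.edges = insert s(r, t) ((T.edges.erase s(w, r)).erase s(w, t)))
    (hBm : ∀ x, x ≠ w → B.mark x = T.mark x)
    (hvw : v ≠ w) : ∃ C, A.Step C ∧ B.Step C := by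
  by_cases hadj : s(v, w) ∈ T.edges
  · -- v and w adjacent
    have hwv : s(w, v) ∈ T.edges := by rwa [Sym2.eq_swap] at hadj
    -- normalise A's data so that the second neighbour of v is w
    obtain ⟨a, ha, haw, hea, hAedges'⟩ : ∃ a, a ∈ T.verts ∧ a ≠ w ∧ s(v, a) ∈ T.edges ∧
        A.edges = insert s(a, w) ((T.edges.erase s(v, a)).erase s(v, w)) := by
      rcases deg2_nbr hdegv hep heq hpq hadj with h | h
      · -- w = p
        have hBed := edges2_swap _ _ _ _ _ hAedges
        rw [← h] at hBed
        exact ⟨q, hq, by omega, heq, hBed⟩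
      · -- w = q
        rw [← h] at hAedges
        exact ⟨p, hp, by omega, hep, hAedges⟩
    -- normalise B's data so that the second neighbour of w is v
    obtain ⟨d, hd, hd_ne, hwd, hBedges'⟩ : ∃ d, d ∈ T.verts ∧ d ≠ v ∧ s(w, d) ∈ T.edges ∧
        B.edges = insert s(d, v) ((T.edges.erase s(w, d)).erase s(w, v)) := by
      rcases deg2_nbr hdegw her het hrt hwv with h | h
      · -- v = r
        have hBed := edges2_swap _ _ _ _ _ hBedges
        rw [← h] at hBed
        exact ⟨t, ht, by omega, het, hBed⟩
      · -- v = t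
        rw [← h] at hBedges
        exact ⟨r, hr, by omega, her, hBedges⟩
    exact join22adj hv hvI hAverts hdegv ha haw hea hadj hAedges' hAm hw hwI hBverts
      hdegw hd hd_ne hwd hBedges' hBm hvw
  · -- v and w not adjacent
    have hwp : w ≠ p := by intro h; apply hadj; rw [h]; exact hep
    have hwq : w ≠ q := by intro h; apply hadj; rw [h]; exact heq
    have hvr : v ≠ r := by
      intro h; apply hadj; rw [← h] at her; rwa [Sym2.eq_swap] at her
    have hvt : v ≠ t := by
      intro h; apply hadj; rw [← h] at het; rwa [Sym2.eq_swap] at het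
    have hAdw : A.deg w = 2 := by
      rw [deg_def, hAedges, fil_insert_nm (not_mem_sym2 hwp hwq),
        fil_erase _ _ _ (not_mem_sym2 hvw.symm hwq), fil_erase _ _ _ (not_mem_sym2 hvw.symm hwp)]
      exact hdegw
    have hAr : s(w, r) ∈ A.edges := by
      rw [hAedges]
      exact Finset.mem_insert_of_mem (Finset.mem_erase.mpr ⟨sym2_ne hvw hvr q,
        Finset.mem_erase.mpr ⟨sym2_ne hvw hvr p, her⟩⟩)
    have hAt : s(w, t) ∈ A.edges := by
      rw [hAedges]
      exact Finset.mem_insert_of_mem (Finset.mem_erase.mpr ⟨sym2_ne hvw hvt q,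
        Finset.mem_erase.mpr ⟨sym2_ne hvw hvt p, het⟩⟩)
    have hAw : w ∈ A.verts := by rw [hAverts]; exact Finset.mem_erase.mpr ⟨hvw.symm, hw⟩
    have hAmw : A.mark w = T.mark w := hAm w hvw.symm
    have hAunst : A.deg w + A.mark w ≤ 2 := by rw [hAdw, hAmw]; omega
    refine ⟨contract2 A w r t hAdw hAr hAt hrt,
      step_contract2 hAw hAunst hAdw hAr hAt hrt, ?_⟩
    have hBv : v ∈ B.verts := by rw [hBverts]; exact Finset.mem_erase.mpr ⟨hvw, hv⟩
    have hBdegv : B.deg v = 2 := by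
      rw [deg_def, hBedges, fil_insert_nm (not_mem_sym2 hvr hvt),
        fil_erase _ _ _ (not_mem_sym2 hvw hvt), fil_erase _ _ _ (not_mem_sym2 hvw hvr)]
      exact hdegv
    have hBmv : B.mark v = T.mark v := hBm v hvw
    refine ⟨v, hBv, by rw [hBdegv, hBmv]; omega, ?_,
      Or.inr (Or.inr ⟨hBdegv, p, ?_, q, ?_, hpq, ?_, ?_, ?_, ?_⟩)⟩
    · show A.verts.erase w = B.verts.erase v
      rw [hAverts, hBverts, Finset.erase_right_comm]
    · rw [hBverts]; exact Finset.mem_erase.mpr ⟨hwp.symm, hp⟩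
    · rw [hBverts]; exact Finset.mem_erase.mpr ⟨hwq.symm, hq⟩
    · rw [hBedges]
      exact Finset.mem_insert_of_mem (Finset.mem_erase.mpr ⟨sym2_ne hvw.symm hwp t,
        Finset.mem_erase.mpr ⟨sym2_ne hvw.symm hwp r, hep⟩⟩)
    · rw [hBedges]
      exact Finset.mem_insert_of_mem (Finset.mem_erase.mpr ⟨sym2_ne hvw.symm hwq t,
        Finset.mem_erase.mpr ⟨sym2_ne hvw.symm hwq r, heq⟩⟩)
    · show insert s(r, t) ((A.edges.erase s(w, r)).erase s(w, t)) =
        insert s(p, q) ((B.edges.erase s(v, p)).erase s(v, q))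
      rw [hAedges, hBedges]
      rw [Finset.erase_insert_of_ne (sym2_ne hwp hwq r : s(p, q) ≠ s(w, r))]
      rw [Finset.erase_insert_of_ne (sym2_ne hwp hwq t : s(p, q) ≠ s(w, t))]
      rw [Finset.erase_insert_of_ne (sym2_ne hvr hvt p : s(r, t) ≠ s(v, p))]
      rw [Finset.erase_insert_of_ne (sym2_ne hvr hvt q : s(r, t) ≠ s(v, q))]
      ext e'
      simp only [Finset.mem_insert, Finset.mem_erase]
      tauto
    · intro x hxv
      show (if x = w then 0 else A.mark x) = B.mark x
      rcases eq_or_ne x w with hxw | hxw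
      · rw [if_pos hxw]
        exact (B.mark_supp x (by simp [hBverts, hxw])).symm
      · rw [if_neg hxw, hAm x hxv, hBm x hxw]

end MarkedTree
namespace MarkedTree

variable {T A B : MarkedTree} {v w : ℕ}

lemma step_det (hv : v ∈ T.verts)
    (hAverts : A.verts = T.verts.erase v)
    (hAc : (T.deg v = 0 ∧ A.edges = T.edges ∧ ∀ x, x ≠ v → A.mark x = T.mark x) ∨
     (T.deg v = 1 ∧ ∃ w ∈ T.verts, w ≠ v ∧ s(v, w) ∈ T.edges ∧
        A.edges = T.edges.erase s(v, w) ∧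
        A.mark w = T.mark w + T.mark v ∧
        ∀ x, x ≠ v → x ≠ w → A.mark x = T.mark x) ∨
     (T.deg v = 2 ∧ ∃ w₁ ∈ T.verts, ∃ w₂ ∈ T.verts, w₁ ≠ w₂ ∧
        s(v, w₁) ∈ T.edges ∧ s(v, w₂) ∈ T.edges ∧
        A.edges = insert s(w₁, w₂) ((T.edges.erase s(v, w₁)).erase s(v, w₂)) ∧
        ∀ x, x ≠ v → A.mark x = T.mark x))
    (hBverts : B.verts = T.verts.erase v)
    (hBc : (T.deg v = 0 ∧ B.edges = T.edges ∧ ∀ x, x ≠ v → B.mark x = T.mark x) ∨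
     (T.deg v = 1 ∧ ∃ w ∈ T.verts, w ≠ v ∧ s(v, w) ∈ T.edges ∧
        B.edges = T.edges.erase s(v, w) ∧
        B.mark w = T.mark w + T.mark v ∧
        ∀ x, x ≠ v → x ≠ w → B.mark x = T.mark x) ∨
     (T.deg v = 2 ∧ ∃ w₁ ∈ T.verts, ∃ w₂ ∈ T.verts, w₁ ≠ w₂ ∧
        s(v, w₁) ∈ T.edges ∧ s(v, w₂) ∈ T.edges ∧
        B.edges = insert s(w₁, w₂) ((T.edges.erase s(v, w₁)).erase s(v, w₂)) ∧
        ∀ x, x ≠ v → B.mark x = T.mark x)) :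
    A = B := by
  rcases hAc with ⟨hd, hAe, hAm⟩ | ⟨hd, u, hu, huv, hvu, hAe, hAmu, hAm⟩ |
      ⟨hd, p, hp, q, hq, hpq, hep, heq, hAe, hAm⟩ <;>
    rcases hBc with ⟨hd', hBe, hBm⟩ | ⟨hd', u', hu', hu'v, hvu', hBe, hBmu', hBm⟩ |
      ⟨hd', p', hp', q', hq', hp'q', hep', heq', hBe, hBm⟩
  · -- 0/0
    refine ext' (hAverts.trans hBverts.symm) (hAe.trans hBe.symm) (funext fun x => ?_)
    rcases eq_or_ne x v with hx | hx
    · rw [A.mark_supp x (by simp [hAverts, hx]), B.mark_supp x (by simp [hBverts, hx])]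
    · rw [hAm x hx, hBm x hx]
  · exfalso; omega
  · exfalso; omega
  · exfalso; omega
  · -- 1/1
    have huu : u' = u := deg1_unique hd hvu' hvu
    refine ext' (hAverts.trans hBverts.symm) (by rw [hAe, hBe, huu]) (funext fun x => ?_)
    rcases eq_or_ne x v with hx | hx
    · rw [A.mark_supp x (by simp [hAverts, hx]), B.mark_supp x (by simp [hBverts, hx])]
    · rcases eq_or_ne x u with hxu | hxu
      · rw [hxu, hAmu, ← huu, hBmu', huu]
      · rw [hAm x hx hxu, hBm x hx (by rw [huu]; exact hxu)]
  · exfalso; omega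
  · exfalso; omega
  · exfalso; omega
  · -- 2/2
    have hp'' : p' = p ∨ p' = q := deg2_nbr hd hep heq hpq hep'
    have hq'' : q' = p ∨ q' = q := deg2_nbr hd hep heq hpq heq'
    have hedges : A.edges = B.edges := by
      rcases hp'' with h1 | h1 <;> rcases hq'' with h2 | h2
      · exfalso; omega
      · rw [hAe, hBe, h1, h2]
      · have hBe' := edges2_swap _ _ _ _ _ hBe
        rw [hAe, hBe', h1, h2]
      · exfalso; omega
    refine ext' (hAverts.trans hBverts.symm) hedges (funext fun x => ?_)
    rcases eq_or_ne x v with hx | hx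
    · rw [A.mark_supp x (by simp [hAverts, hx]), B.mark_supp x (by simp [hBverts, hx])]
    · rw [hAm x hx, hBm x hx]

lemma diamond (hA : T.Step A) (hB : T.Step B) : A = B ∨ ∃ C, A.Step C ∧ B.Step C := by
  obtain ⟨v, hv, hvI, hAverts, hAc⟩ := hA
  obtain ⟨w, hw, hwI, hBverts, hBc⟩ := hB
  rcases eq_or_ne v w with hvw | hvw
  · left
    rw [← hvw] at hBverts hBc
    exact step_det hv hAverts hAc hBverts hBc
  · right
    rcases hAc with ⟨hd, hAe, hAm⟩ | ⟨hd, u, hu, huv, hvu, hAe, hAmu, hAm⟩ |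
        ⟨hd, p, hp, q, hq, hpq, hep, heq, hAe, hAm⟩
    · exfalso
      have := (deg0 hv hd).1
      rw [this] at hw
      simp at hw
      exact hvw hw.symm
    · rcases hBc with ⟨hd', hBe, hBm⟩ | ⟨hd', u', hu', hu'v, hvu', hBe, hBmu', hBm⟩ |
          ⟨hd', p', hp', q', hq', hp'q', hep', heq', hBe, hBm⟩
      · exfalso
        have := (deg0 hw hd').1
        rw [this] at hv
        simp at hv
        exact hvw hv
      · exact join11 hv hvI hAverts hd hu huv hvu hAe hAmu hAm
          hw hwI hBverts hd' hu' hu'v hvu' hBe hBmu' hBm hvw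
      · exact join12 hv hvI hAverts hd hu huv hvu hAe hAmu hAm
          hw hwI hBverts hd' hp' hq' hp'q' hep' heq' hBe hBm hvw
    · rcases hBc with ⟨hd', hBe, hBm⟩ | ⟨hd', u', hu', hu'v, hvu', hBe, hBmu', hBm⟩ |
          ⟨hd', p', hp', q', hq', hp'q', hep', heq', hBe, hBm⟩
      · exfalso
        have := (deg0 hw hd').1
        rw [this] at hv
        simp at hv
        exact hvw hv
      · obtain ⟨C, h1, h2⟩ := join12 hw hwI hBverts hd' hu' hu'v hvu' hBe hBmu' hBm
          hv hvI hAverts hd hp hq hpq hep heq hAe hAm hvw.symm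
        exact ⟨C, h2, h1⟩
      · exact join22 hv hvI hAverts hd hp hq hpq hep heq hAe hAm
          hw hwI hBverts hd' hp' hq' hp'q' hep' heq' hBe hBm hvw

lemma step_card (h : T.Step A) : A.verts.card + 1 = T.verts.card := by
  obtain ⟨v, hv, -, hA, -⟩ := h
  rw [hA, Finset.card_erase_of_mem hv]
  have : 1 ≤ T.verts.card := Finset.card_pos.mpr ⟨v, hv⟩
  omega

lemma normal_rtg {D : MarkedTree} (h : Relation.ReflTransGen MarkedTree.Step A D)
    (hn : ∀ A', ¬ A.Step A') : D = A := by
  rcases h.cases_head with h | ⟨c, hc, _⟩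
  · exact h.symm
  · exact absurd hc (hn c)

end MarkedTree

theorem stmt_15' (T : MarkedTree) :
    (∀ (k : ℕ) (seq : ℕ → MarkedTree), seq 0 = T →
        (∀ i < k, MarkedTree.Step (seq i) (seq (i + 1))) → k ≤ T.verts.card) ∧
    (∀ A B : MarkedTree,
        Relation.ReflTransGen MarkedTree.Step T A →
        Relation.ReflTransGen MarkedTree.Step T B →
        (∀ A', ¬ MarkedTree.Step A A') → (∀ B', ¬ MarkedTree.Step B B') →
        A = B) := by
  constructor
  · intro k seq h0 hstep
    have key : ∀ i, i ≤ k → (seq i).verts.card + i = T.verts.card := by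
      intro i
      induction i with
      | zero => intro _; rw [h0, Nat.add_zero]
      | succ n ih =>
        intro hn
        have h1 := hstep n (by omega)
        have h2 := MarkedTree.step_card h1
        have h3 := ih (by omega)
        omega
    have := key k le_rfl
    omega
  · intro A B hA hB hnA hnB
    have hcr : ∀ (a b c : MarkedTree), a.Step b → a.Step c →
        ∃ d, Relation.ReflGen MarkedTree.Step b d ∧
          Relation.ReflTransGen MarkedTree.Step c d := by
      intro a b c h1 h2
      rcases MarkedTree.diamond h1 h2 with h | ⟨C, hC1, hC2⟩
      · refine ⟨b, Relation.ReflGen.refl, ?_⟩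
        rw [← h]
      · exact ⟨C, Relation.ReflGen.single hC1, Relation.ReflTransGen.single hC2⟩
    obtain ⟨d, hd1, hd2⟩ := Relation.church_rosser hcr hA hB
    exact (MarkedTree.normal_rtg hd1 hnA).symm.trans (MarkedTree.normal_rtg hd2 hnB)


/-- The stabilization process (iterated contraction of unstable vertices after
forgetting a set of markings) terminates after at most `|V(T)|` steps, and its
result is independent of the order in which unstable vertices are contracted:
any two normal forms reachable from `T` coincide. -/

theorem stmt_15 (T : MarkedTree) :
    (∀ (k : ℕ) (seq : ℕ → MarkedTree), seq 0 = T →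
        (∀ i < k, MarkedTree.Step (seq i) (seq (i + 1))) → k ≤ T.verts.card) ∧
    (∀ A B : MarkedTree,
        Relation.ReflTransGen MarkedTree.Step T A →
        Relation.ReflTransGen MarkedTree.Step T B →
        (∀ A', ¬ MarkedTree.Step A A') → (∀ B', ¬ MarkedTree.Step B B') →
        A = B) := stmt_15' T
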